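/- arXiv:2404.16665 — 2 statements merged into one kernel-verified Lean document; each statement's English description precedes it below -/
import Mathlib

section
/- If y is continuously differentiable on [x_n, x_{n+1}] with h = x_{n+1} - x_n, then for γ ≥ 2, the γ-fold iterated integral of y' over [x_n, x_{n+1}] equals the (γ-1)-fold iterated integral of y over the same interval minus y(x_n)·h^{γ-1}/(γ-1)!. -/
open intervalIntegral

/-- `iterInt a g k x` is the `k`-fold iterated integral of `g` from `a` to `x`. -/
noncomputable def iterInt (a : ℝ) (g : ℝ → ℝ) : ℕ → ℝ → ℝ
  | 0, x => g x
  | (k+1), x => ∫ t in a..x, iterInt a g k t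

lemma iterInt_contOn {a b : ℝ} (hab : a ≤ b) {f : ℝ → ℝ}
    (hf : ContinuousOn f (Set.Icc a b)) : ∀ k, ContinuousOn (iterInt a f k) (Set.Icc a b)
  | 0 => hf
  | (k+1) => by
    have ih := iterInt_contOn hab hf k
    have hint : MeasureTheory.IntegrableOn (iterInt a f k) (Set.Icc a b) :=
      ih.integrableOn_Icc
    have := intervalIntegral.continuousOn_primitive_interval
      (by rwa [Set.uIcc_of_le hab] : MeasureTheory.IntegrableOn (iterInt a f k) (Set.uIcc a b))
    rw [Set.uIcc_of_le hab] at this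
    exact this

lemma iterInt_sub_const {a b : ℝ} (hab : a ≤ b) {f : ℝ → ℝ}
    (hf : ContinuousOn f (Set.Icc a b)) (c : ℝ) :
    ∀ k, ∀ x ∈ Set.Icc a b,
      iterInt a (fun t => f t - c) k x = iterInt a f k x - c * (x - a) ^ k / (Nat.factorial k)
  | 0, x, hx => by simp [iterInt]
  | (k+1), x, hx => by
    have hax : a ≤ x := hx.1
    have hsub : Set.uIcc a x ⊆ Set.Icc a b := by
      rw [Set.uIcc_of_le hax]
      exact Set.Icc_subset_Icc le_rfl hx.2
    have hcongr : Set.EqOn (iterInt a (fun t => f t - c) k)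
        (fun t => iterInt a f k t - c * (t - a) ^ k / (Nat.factorial k)) (Set.uIcc a x) :=
      fun t ht => iterInt_sub_const hab hf c k t (hsub ht)
    have hint1 : IntervalIntegrable (iterInt a f k) MeasureTheory.volume a x :=
      ((iterInt_contOn hab hf k).mono hsub).intervalIntegrable
    have hint2 : IntervalIntegrable (fun t => c * (t - a) ^ k / (Nat.factorial k))
        MeasureTheory.volume a x := (Continuous.intervalIntegrable (by continuity) a x)
    have hpow : (∫ t in a..x, (t - a) ^ k) = (x - a) ^ (k + 1) / (k + 1) := by
      have := intervalIntegral.integral_comp_sub_right (fun u => u ^ k) a (a := a) (b := x)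
      rw [this, integral_pow, sub_self]
      simp
    show (∫ t in a..x, iterInt a (fun t => f t - c) k t) = _
    rw [intervalIntegral.integral_congr hcongr,
      intervalIntegral.integral_sub hint1 hint2]
    have : (∫ t in a..x, c * (t - a) ^ k / (Nat.factorial k))
        = c * (x - a) ^ (k + 1) / (Nat.factorial (k + 1)) := by
      have : (fun t => c * (t - a) ^ k / (Nat.factorial k))
          = fun t => (c / (Nat.factorial k)) * (t - a) ^ k := by
        funext t; ring
      rw [this, intervalIntegral.integral_const_mul, hpow, Nat.factorial_succ]
      have h1 : (Nat.factorial k : ℝ) ≠ 0 := Nat.cast_ne_zero.mpr (Nat.factorial_ne_zero k)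
      have h2 : ((k : ℝ) + 1) ≠ 0 := by positivity
      push_cast
      rw [div_mul_div_comm]
      ring
    rw [this]
    rfl

lemma iterInt_deriv_aux (xn xnp1 : ℝ) (hle : xn ≤ xnp1)
    (y y' : ℝ → ℝ)
    (hy : ∀ x ∈ Set.Icc xn xnp1, HasDerivAt y (y' x) x)
    (hy' : ContinuousOn y' (Set.Icc xn xnp1)) :
    ∀ k, ∀ x ∈ Set.Icc xn xnp1,
      iterInt xn y' (k + 1) x = iterInt xn (fun t => y t - y xn) k x
  | 0, x, hx => by
    have hax : xn ≤ x := hx.1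
    have hsub : Set.uIcc xn x ⊆ Set.Icc xn xnp1 := by
      rw [Set.uIcc_of_le hax]
      exact Set.Icc_subset_Icc le_rfl hx.2
    show (∫ t in xn..x, y' t) = y x - y xn
    exact intervalIntegral.integral_eq_sub_of_hasDerivAt
      (fun t ht => hy t (hsub ht)) ((hy'.mono hsub).intervalIntegrable)
  | (k+1), x, hx => by
    have hax : xn ≤ x := hx.1
    have hsub : Set.uIcc xn x ⊆ Set.Icc xn xnp1 := by
      rw [Set.uIcc_of_le hax]
      exact Set.Icc_subset_Icc le_rfl hx.2
    show (∫ t in xn..x, iterInt xn y' (k+1) t) = ∫ t in xn..x, iterInt xn (fun t => y t - y xn) k t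
    exact intervalIntegral.integral_congr
      (fun t ht => iterInt_deriv_aux xn xnp1 hle y y' hy hy' k t (hsub ht))

/-- If `y` is continuously differentiable on `[xₙ, xₙ₊₁]` with derivative `y'`,
then for `γ ≥ 2` the `γ`-fold iterated integral of `y'` equals the `(γ-1)`-fold
iterated integral of `y` minus `y(xₙ)·h^{γ-1}/(γ-1)!`. -/
theorem iterInt_deriv (xn xnp1 : ℝ) (hle : xn ≤ xnp1) (h : ℝ) (hh : h = xnp1 - xn)
    (y y' : ℝ → ℝ)
    (hy : ∀ x ∈ Set.Icc xn xnp1, HasDerivAt y (y' x) x)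
    (hy' : ContinuousOn y' (Set.Icc xn xnp1))
    (γ : ℕ) (hγ : 2 ≤ γ) :
    iterInt xn y' γ xnp1 =
      iterInt xn y (γ - 1) xnp1 - y xn * h ^ (γ - 1) / (Nat.factorial (γ - 1) : ℝ) := by
  obtain ⟨k, rfl⟩ : ∃ k, γ = k + 1 := ⟨γ - 1, by omega⟩
  have hycont : ContinuousOn y (Set.Icc xn xnp1) :=
    fun x hx => (hy x hx).continuousAt.continuousWithinAt
  have hmem : xnp1 ∈ Set.Icc xn xnp1 := ⟨hle, le_rfl⟩
  rw [Nat.add_sub_cancel, hh,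
    iterInt_deriv_aux xn xnp1 hle y y' hy hy' k xnp1 hmem,
    iterInt_sub_const hle hycont (y xn) k xnp1 hmem]
end

section
/- The stability function of the nIRK4 method, R(z) = -(z^3 + 12z^2 + 60z + 120)/(z^3 - 12z^2 + 60z - 120), satisfies |R(z)| ≤ 1 for a complex number z = u + iv (with z not a pole of R) if and only if u·(u^4 + v^4 + 2u^2v^2 + 70u^2 + 30v^2 + 600) ≤ 0. -/
open Complex

/-- For the stability function of nIRK4, `|R(z)| ≤ 1` iff
`u·(u⁴ + v⁴ + 2u²v² + 70u² + 30v² + 600) ≤ 0` where `z = u + iv`. -/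
theorem nIRK4_stability_characterization (u v : ℝ) (z : ℂ) (hz : z = u + v * I)
    (hden : z ^ 3 - 12 * z ^ 2 + 60 * z - 120 ≠ 0) :
    ‖(-(z ^ 3 + 12 * z ^ 2 + 60 * z + 120) /
        (z ^ 3 - 12 * z ^ 2 + 60 * z - 120))‖ ≤ 1 ↔
      u * (u ^ 4 + v ^ 4 + 2 * u ^ 2 * v ^ 2 + 70 * u ^ 2 + 30 * v ^ 2 + 600) ≤ 0 := by
  rw [norm_div, div_le_one (norm_pos_iff.mpr hden),
    ← pow_le_pow_iff_left₀ (norm_nonneg _) (norm_nonneg _) two_ne_zero,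
    Complex.sq_norm, Complex.sq_norm, Complex.normSq_apply, Complex.normSq_apply]
  subst hz
  simp only [add_re, add_im, mul_re, mul_im, pow_succ, pow_zero, one_mul, sub_re, sub_im,
    neg_re, neg_im, ofReal_re, ofReal_im, I_re, I_im, re_ofNat, im_ofNat]
  constructor <;> intro h <;> nlinarith [h, sq_nonneg u, sq_nonneg v, sq_nonneg (u*v)]
end
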